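/- Let n ≥ 1, r > 0, Δt > 0, s₀ ∈ ℝ with s₀ < n, and let τ₁ ≥ 0 satisfy (n - s₀)·exp(-r·τ₁) ≤ 1 with τ₁ a multiple of Δt. Then ∫₀^∞ min(1, (n - s₀)·exp(-r·⌊σ/Δt⌋·Δt)) dσ ≤ τ₁ + (e^{-r·τ₁}/(1 - e^{-r·Δt}))·(n - s₀)·Δt. -/

import Mathlib

open MeasureTheory

theorem broadcast_time_integral_bound (n : ℕ) (hn : 1 ≤ n) (r Δt s₀ τ₁ : ℝ)
    (hr : 0 < r) (hΔt : 0 < Δt) (hs₀ : s₀ < n) (hτ₁ : 0 ≤ τ₁)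
    (hmul : ∃ k : ℕ, τ₁ = k * Δt)
    (hτ : ((n : ℝ) - s₀) * Real.exp (-r * τ₁) ≤ 1) :
    ∫ σ in Set.Ioi (0 : ℝ),
        min 1 (((n : ℝ) - s₀) * Real.exp (-r * (⌊σ / Δt⌋ : ℝ) * Δt)) ≤
      τ₁ + (Real.exp (-r * τ₁) / (1 - Real.exp (-r * Δt))) * ((n : ℝ) - s₀) * Δt := by
  obtain ⟨k, hk⟩ := hmul
  set C : ℝ := (n : ℝ) - s₀ with hCdef
  have hC : 0 < C := by simp only [hCdef]; linarith
  set f : ℝ → ℝ := fun σ => min 1 (C * Real.exp (-r * (⌊σ / Δt⌋ : ℝ) * Δt)) with hfdef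
  have hfnn : ∀ σ, 0 ≤ f σ := fun σ => le_min one_pos.le (by positivity)
  have hfle1 : ∀ σ, f σ ≤ 1 := fun σ => min_le_left _ _
  have hmeas : Measurable f := by
    apply Measurable.min measurable_const
    apply Measurable.const_mul
    apply Real.measurable_exp.comp
    apply Measurable.mul_const
    apply Measurable.const_mul
    exact Measurable.comp (measurable_from_top) ((measurable_id.div_const Δt).floor)
  -- pointwise domination for integrability
  have hdom : ∀ σ : ℝ, f σ ≤ C * Real.exp (r * Δt) * Real.exp (-r * σ) := by
    intro σ
    have h1 : σ / Δt - 1 < (⌊σ / Δt⌋ : ℝ) := Int.sub_one_lt_floor _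
    have h2 : -r * (⌊σ / Δt⌋ : ℝ) * Δt ≤ r * Δt + -r * σ := by
      have := (mul_lt_mul_of_pos_left h1 hr)
      have h3 : σ - Δt < (⌊σ / Δt⌋ : ℝ) * Δt := by
        have := (mul_lt_mul_of_pos_right h1 hΔt)
        calc σ - Δt = (σ / Δt - 1) * Δt := by field_simp
          _ < (⌊σ / Δt⌋ : ℝ) * Δt := this
      nlinarith
    calc f σ ≤ C * Real.exp (-r * (⌊σ / Δt⌋ : ℝ) * Δt) := min_le_right _ _
      _ ≤ C * (Real.exp (r * Δt) * Real.exp (-r * σ)) := by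
          rw [← Real.exp_add]
          exact mul_le_mul_of_nonneg_left (Real.exp_le_exp.mpr h2) hC.le
      _ = C * Real.exp (r * Δt) * Real.exp (-r * σ) := by ring
  have hintOn : ∀ a : ℝ, IntegrableOn f (Set.Ioi a) := by
    intro a
    apply Integrable.mono' (((exp_neg_integrableOn_Ioi a hr).const_mul (C * Real.exp (r * Δt))))
      hmeas.aestronglyMeasurable
    filter_upwards with σ
    rw [Real.norm_eq_abs, abs_of_nonneg (hfnn σ)]
    exact hdom σ
  have hτk : τ₁ = (k : ℝ) * Δt := hk
  -- split the integral
  have hsplit : Set.Ioi (0 : ℝ) = Set.Ioc 0 τ₁ ∪ Set.Ioi τ₁ := (Set.Ioc_union_Ioi_eq_Ioi hτ₁).symm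
  have hint1 : IntegrableOn f (Set.Ioc 0 τ₁) := (hintOn 0).mono_set Set.Ioc_subset_Ioi_self
  have hint2 : IntegrableOn f (Set.Ioi τ₁) := hintOn τ₁
  have hsum : ∫ σ in Set.Ioi (0:ℝ), f σ
      = (∫ σ in Set.Ioc 0 τ₁, f σ) + ∫ σ in Set.Ioi τ₁, f σ := by
    rw [hsplit]
    exact setIntegral_union Set.Ioc_disjoint_Ioi_same measurableSet_Ioi hint1 hint2
  -- first part
  have hpart1 : (∫ σ in Set.Ioc 0 τ₁, f σ) ≤ τ₁ := by
    calc (∫ σ in Set.Ioc 0 τ₁, f σ) ≤ ∫ _ in Set.Ioc 0 τ₁, (1:ℝ) := by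
          apply setIntegral_mono_on hint1 (integrableOn_const (by
            rw [Real.volume_Ioc]; exact ENNReal.ofReal_ne_top)) measurableSet_Ioc
          intro σ _; exact hfle1 σ
      _ = τ₁ := by
          rw [setIntegral_const, Real.volume_real_Ioc_of_le hτ₁, smul_eq_mul, mul_one,
            sub_zero]
  -- second part : decompose Ioi τ₁ into intervals
  set s : ℕ → Set ℝ := fun i => Set.Ioc (τ₁ + i * Δt) (τ₁ + (i + 1) * Δt) with hsdef
  have hcover : Set.Ioi τ₁ = ⋃ i : ℕ, s i := by
    ext x
    simp only [Set.mem_Ioi, Set.mem_iUnion, hsdef, Set.mem_Ioc]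
    constructor
    · intro hx
      set y := (x - τ₁) / Δt with hy
      have hy0 : 0 < y := div_pos (by linarith) hΔt
      refine ⟨⌈y⌉₊ - 1, ?_, ?_⟩
      · have h1 : 1 ≤ ⌈y⌉₊ := Nat.one_le_ceil_iff.mpr hy0
        have hc : ((⌈y⌉₊ - 1 : ℕ) : ℝ) = (⌈y⌉₊ : ℝ) - 1 := by
          rw [Nat.cast_sub h1, Nat.cast_one]
        have h2 : (⌈y⌉₊ : ℝ) - 1 < y := by
          have := Nat.ceil_lt_add_one hy0.le
          linarith
        have h3 : ((⌈y⌉₊ - 1 : ℕ) : ℝ) * Δt < y * Δt := by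
          rw [hc]; exact mul_lt_mul_of_pos_right h2 hΔt
        have : y * Δt = x - τ₁ := by rw [hy, div_mul_cancel₀ _ hΔt.ne']
        linarith
      · have h1 : 1 ≤ ⌈y⌉₊ := Nat.one_le_ceil_iff.mpr hy0
        have hc : ((⌈y⌉₊ - 1 : ℕ) : ℝ) + 1 = (⌈y⌉₊ : ℝ) := by
          rw [Nat.cast_sub h1, Nat.cast_one]; ring
        have h2 : y ≤ (⌈y⌉₊ : ℝ) := Nat.le_ceil y
        have : y * Δt = x - τ₁ := by rw [hy, div_mul_cancel₀ _ hΔt.ne']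
        nlinarith
    · rintro ⟨i, hi, _⟩
      have : 0 ≤ (i : ℝ) * Δt := by positivity
      linarith
  have hmeas_s : ∀ i : ℕ, MeasurableSet (s i) := fun i => measurableSet_Ioc
  have hdisj : Pairwise (Function.onFun Disjoint s) := by
    have key : ∀ i j : ℕ, i < j → Disjoint (s i) (s j) := by
      intro i j h
      rw [Set.disjoint_left]
      intro x hx1 hx2
      simp only [hsdef, Set.mem_Ioc] at hx1 hx2
      have : ((i : ℝ) + 1) ≤ j := by exact_mod_cast h
      nlinarith [hx1.2, hx2.1]
    intro i j hij
    rcases hij.lt_or_gt with h | h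
    · exact key i j h
    · exact (key j i h).symm
  have hint2' : IntegrableOn f (⋃ i, s i) := by rw [← hcover]; exact hint2
  have hhs : HasSum (fun i : ℕ => ∫ σ in s i, f σ) (∫ σ in Set.Ioi τ₁, f σ) := by
    rw [hcover]
    exact hasSum_integral_iUnion hmeas_s hdisj hint2'
  -- geometric bound
  have hq1 : Real.exp (-r * Δt) < 1 := by
    rw [Real.exp_lt_one_iff]; nlinarith
  have hgeo : HasSum (fun i : ℕ => C * Δt * Real.exp (-r * τ₁) * Real.exp (-r * Δt) ^ i)
      (C * Δt * Real.exp (-r * τ₁) * (1 - Real.exp (-r * Δt))⁻¹) :=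
    (hasSum_geometric_of_lt_one (Real.exp_pos _).le hq1).mul_left _
  have hterm : ∀ i : ℕ, (∫ σ in s i, f σ)
      ≤ C * Δt * Real.exp (-r * τ₁) * Real.exp (-r * Δt) ^ i := by
    intro i
    have hbound : ∀ σ ∈ s i, f σ ≤ C * Real.exp (-r * τ₁) * Real.exp (-r * Δt) ^ i := by
      intro σ hσ
      simp only [hsdef, Set.mem_Ioc] at hσ
      have hσ1 : ((k : ℝ) + i) * Δt < σ := by rw [hτk] at hσ; linarith [hσ.1]
      have hfl : ((k : ℝ) + i) ≤ (⌊σ / Δt⌋ : ℝ) := by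
        have h1 : ((k : ℝ) + i) ≤ σ / Δt := by
          rw [le_div_iff₀ hΔt]; linarith
        have h2 : ((k + i : ℤ) : ℝ) ≤ σ / Δt := by push_cast; push_cast at h1; linarith
        have := Int.le_floor.mpr h2
        exact_mod_cast (by exact_mod_cast this : ((k + i : ℤ) : ℝ) ≤ (⌊σ / Δt⌋ : ℝ))
      have hexp : Real.exp (-r * (⌊σ / Δt⌋ : ℝ) * Δt)
          ≤ Real.exp (-r * τ₁) * Real.exp (-r * Δt) ^ i := by
        rw [← Real.exp_nat_mul, ← Real.exp_add]
        apply Real.exp_le_exp.mpr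
        rw [hτk]
        have h0 : -r * (⌊σ / Δt⌋ : ℝ) * Δt ≤ -r * ((k : ℝ) + i) * Δt := by
          have := mul_le_mul_of_nonneg_right hfl (mul_pos hr hΔt).le
          nlinarith
        nlinarith [h0]
      calc f σ ≤ C * Real.exp (-r * (⌊σ / Δt⌋ : ℝ) * Δt) := min_le_right _ _
        _ ≤ C * (Real.exp (-r * τ₁) * Real.exp (-r * Δt) ^ i) :=
            mul_le_mul_of_nonneg_left hexp hC.le
        _ = C * Real.exp (-r * τ₁) * Real.exp (-r * Δt) ^ i := by ring
    have hfi : IntegrableOn f (s i) := hint2'.mono_set (Set.subset_iUnion s i)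
    calc (∫ σ in s i, f σ)
        ≤ ∫ _ in s i, C * Real.exp (-r * τ₁) * Real.exp (-r * Δt) ^ i := by
          apply setIntegral_mono_on hfi (integrableOn_const (by
            simp only [hsdef]; rw [Real.volume_Ioc]; exact ENNReal.ofReal_ne_top))
            (hmeas_s i) hbound
      _ = C * Δt * Real.exp (-r * τ₁) * Real.exp (-r * Δt) ^ i := by
          simp only [hsdef]
          rw [setIntegral_const, Real.volume_real_Ioc_of_le (by nlinarith : τ₁ + ↑i * Δt ≤ τ₁ + (↑i + 1) * Δt), smul_eq_mul]
          ring
  have hpart2 : (∫ σ in Set.Ioi τ₁, f σ)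
      ≤ C * Δt * Real.exp (-r * τ₁) * (1 - Real.exp (-r * Δt))⁻¹ :=
    hasSum_le hterm hhs hgeo
  have hfinal := hsum ▸ (add_le_add hpart1 hpart2)
  calc ∫ σ in Set.Ioi (0:ℝ), f σ
      ≤ τ₁ + C * Δt * Real.exp (-r * τ₁) * (1 - Real.exp (-r * Δt))⁻¹ := hfinal
    _ = τ₁ + Real.exp (-r * τ₁) / (1 - Real.exp (-r * Δt)) * C * Δt := by
        rw [div_eq_mul_inv]; ring
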